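/- arXiv:2409.05572 — 4 statements merged into one kernel-verified Lean document; each statement's English description precedes it below -/
import Mathlib

section
/- Let x ∈ ℂⁿ satisfy v₁*x ≠ 0 and x − v₁(v₁*x) ≠ 0, and set x̌ = (x − v₁(v₁*x))/‖x − v₁(v₁*x)‖₂. Then tan∠(A⁻¹x, v₁) / tan∠(x, v₁) = λ₁ · ‖A⁻¹x̌‖₂. (Proposition 3.1: the one-step convergence rate of the inverse power method.) -/
open scoped ComplexOrder

/-- The tangent of the angle between a nonzero vector `x` and a unit vector `v₁`:
`tan∠(x, v₁) = ‖x − v₁(v₁*x)‖₂ / |v₁*x|`. -/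
noncomputable def tanAngle {m : ℕ} (v₁ x : EuclideanSpace ℂ (Fin m)) : ℝ :=
  ‖x - (inner ℂ v₁ x : ℂ) • v₁‖ / ‖(inner ℂ v₁ x : ℂ)‖

/-- Proposition 3.1: the one-step convergence rate of the inverse power method.
If `A` is Hermitian positive definite with eigenvalues `0 < μ 0 ≤ μ 1 ≤ ⋯` and orthonormal
eigenvectors `v i`, and `x` satisfies `v₁*x ≠ 0` and `x − v₁(v₁*x) ≠ 0`, then
`tan∠(A⁻¹x, v₁) / tan∠(x, v₁) = μ₁ ⬝ ‖A⁻¹ x̌‖` where `x̌` is the normalized component of `x`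
orthogonal to `v₁`. -/
theorem inverse_power_one_step_rate {n : ℕ}
    (A : Matrix (Fin (n + 1)) (Fin (n + 1)) ℂ) (hA : A.PosDef)
    (μ : Fin (n + 1) → ℝ) (hμpos : ∀ i, 0 < μ i) (hμmono : Monotone μ)
    (v : Fin (n + 1) → EuclideanSpace ℂ (Fin (n + 1))) (hv : Orthonormal ℂ v)
    (hAv : ∀ i, Matrix.toEuclideanLin A (v i) = (μ i : ℂ) • v i)
    (x : EuclideanSpace ℂ (Fin (n + 1)))
    (hx1 : (inner ℂ (v 0) x : ℂ) ≠ 0)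
    (hx2 : x - (inner ℂ (v 0) x : ℂ) • v 0 ≠ 0) :
    tanAngle (v 0) (Matrix.toEuclideanLin A⁻¹ x) / tanAngle (v 0) x
      = μ 0 * ‖Matrix.toEuclideanLin A⁻¹
          ((‖x - (inner ℂ (v 0) x : ℂ) • v 0‖ : ℂ)⁻¹ • (x - (inner ℂ (v 0) x : ℂ) • v 0))‖ := by
  set c : ℂ := inner ℂ (v 0) x with hc
  set y : EuclideanSpace ℂ (Fin (n + 1)) := x - c • v 0 with hy
  set B : EuclideanSpace ℂ (Fin (n + 1)) →ₗ[ℂ] EuclideanSpace ℂ (Fin (n + 1)) :=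
    Matrix.toEuclideanLin A⁻¹ with hB
  have hdet : IsUnit A.det := A.isUnit_iff_isUnit_det.mp hA.isUnit
  have hμ0 : (μ 0 : ℂ) ≠ 0 := by exact_mod_cast (hμpos 0).ne'
  have hBA : ∀ w, B (Matrix.toEuclideanLin A w) = w := by
    intro w
    simp [hB, Matrix.toEuclideanLin_apply, Matrix.mulVec_mulVec,
      Matrix.nonsing_inv_mul A hdet]
  have hBv0 : B (v 0) = ((μ 0 : ℂ))⁻¹ • v 0 := by
    have h := hBA (v 0)
    rw [hAv 0, map_smul] at h
    calc B (v 0) = (μ 0 : ℂ)⁻¹ • ((μ 0 : ℂ) • B (v 0)) := by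
          rw [smul_smul, inv_mul_cancel₀ hμ0, one_smul]
      _ = (μ 0 : ℂ)⁻¹ • v 0 := by rw [h]
  have hsym : (Matrix.toEuclideanLin A⁻¹).IsSymmetric :=
    Matrix.isHermitian_iff_isSymmetric.mp hA.inv.1
  have hvv : (inner ℂ (v 0) (v 0) : ℂ) = 1 := by
    have := hv.1 0
    rw [@inner_self_eq_norm_sq_to_K ℂ] at *
    rw [this]; norm_num
  have hv0y : (inner ℂ (v 0) y : ℂ) = 0 := by
    simp [hy, inner_sub_right, inner_smul_right, hvv, hc, hv.1 0]
  have hv0By : (inner ℂ (v 0) (B y) : ℂ) = 0 := by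
    rw [hB, ← hsym (v 0) y]
    rw [← hB, hBv0, inner_smul_left, hv0y, mul_zero]
  have hx' : x = c • v 0 + y := by simp [hy]
  have hinner : (inner ℂ (v 0) (B x) : ℂ) = c * (μ 0 : ℂ)⁻¹ := by
    rw [hx', map_add, map_smul, hBv0, inner_add_right, inner_smul_right, inner_smul_right,
      hvv, hv0By]
    ring
  have hresid : B x - (inner ℂ (v 0) (B x) : ℂ) • v 0 = B y := by
    rw [hinner, hx', map_add, map_smul, hBv0, smul_smul]
    abel
  have hc0 : ‖c‖ ≠ 0 := norm_ne_zero_iff.mpr hx1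
  have hy0 : ‖y‖ ≠ 0 := norm_ne_zero_iff.mpr hx2
  have hμR : μ 0 ≠ 0 := (hμpos 0).ne'
  have hnormμ : ‖((μ 0 : ℝ) : ℂ)⁻¹‖ = (μ 0)⁻¹ := by
    rw [norm_inv, Complex.norm_real, Real.norm_eq_abs, abs_of_pos (hμpos 0)]
  have hRHS : ‖Matrix.toEuclideanLin A⁻¹ ((‖y‖ : ℂ)⁻¹ • y)‖ = ‖y‖⁻¹ * ‖B y‖ := by
    rw [← hB, map_smul, norm_smul, norm_inv, Complex.norm_real, Real.norm_eq_abs,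
      abs_of_nonneg (norm_nonneg y)]
  rw [hRHS]
  unfold tanAngle
  rw [← hc, ← hy, hresid, hinner, norm_mul, hnormμ]
  have hac : ‖c‖ ≠ 0 := hc0
  field_simp
end

section
/- Assume n ≥ 2 and let x ∈ ℂⁿ satisfy v₁*x ≠ 0 and x − v₁(v₁*x) ≠ 0. Then tan∠(A⁻¹x, v₁) ≤ (λ₁/λ₂) · tan∠(x, v₁). (The worst-case one-step convergence bound for the inverse power method.) -/
open scoped ComplexOrder

/-- The worst-case one-step convergence bound for the inverse power method:
`tan∠(A⁻¹x, v₁) ≤ (λ₁/λ₂) · tan∠(x, v₁)` (here `n ≥ 2`, i.e. dimension is `n + 2`). -/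
theorem inverse_power_worst_case_bound {n : ℕ}
    (A : Matrix (Fin (n + 2)) (Fin (n + 2)) ℂ) (hA : A.PosDef)
    (μ : Fin (n + 2) → ℝ) (hμpos : ∀ i, 0 < μ i) (hμmono : Monotone μ)
    (v : Fin (n + 2) → EuclideanSpace ℂ (Fin (n + 2))) (hv : Orthonormal ℂ v)
    (hAv : ∀ i, Matrix.toEuclideanLin A (v i) = (μ i : ℂ) • v i)
    (x : EuclideanSpace ℂ (Fin (n + 2)))
    (hx1 : (inner ℂ (v 0) x : ℂ) ≠ 0)
    (hx2 : x - (inner ℂ (v 0) x : ℂ) • v 0 ≠ 0) :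
    tanAngle (v 0) (Matrix.toEuclideanLin A⁻¹ x) ≤ μ 0 / μ 1 * tanAngle (v 0) x := by
  classical
  have hdet : IsUnit A.det := (Matrix.isUnit_iff_isUnit_det A).mp hA.isUnit
  have hinvA : A⁻¹ * A = 1 := Matrix.nonsing_inv_mul A hdet
  have hcomp : ∀ z, Matrix.toEuclideanLin A⁻¹ (Matrix.toEuclideanLin A z) = z := by
    intro z
    rw [Matrix.toEuclideanLin_apply, Matrix.toEuclideanLin_apply]
    simp [Matrix.mulVec_mulVec, hinvA]
  have hinv : ∀ i, Matrix.toEuclideanLin A⁻¹ (v i) = ((μ i : ℂ))⁻¹ • v i := by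
    intro i
    have h0 : (μ i : ℂ) ≠ 0 := by exact_mod_cast (hμpos i).ne'
    have h := hcomp (v i)
    rw [hAv i, map_smul] at h
    calc Matrix.toEuclideanLin A⁻¹ (v i)
        = ((μ i:ℂ))⁻¹ • ((μ i:ℂ) • Matrix.toEuclideanLin A⁻¹ (v i)) := by
          rw [smul_smul, inv_mul_cancel₀ h0, one_smul]
      _ = ((μ i:ℂ))⁻¹ • v i := by rw [h]
  have hcard : Fintype.card (Fin (n+2)) = Module.finrank ℂ (EuclideanSpace ℂ (Fin (n+2))) := by
    simp
  have hspan : ⊤ ≤ Submodule.span ℂ (Set.range v) :=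
    (hv.linearIndependent.span_eq_top_of_card_eq_finrank hcard).ge
  set b : OrthonormalBasis (Fin (n+2)) ℂ (EuclideanSpace ℂ (Fin (n+2))) :=
    OrthonormalBasis.mk hv hspan with hbdef
  have hb : ⇑b = v := OrthonormalBasis.coe_mk _ _
  set c : Fin (n+2) → ℂ := fun i => inner ℂ (v i) x with hcdef
  set y := Matrix.toEuclideanLin A⁻¹ x with hy
  have hxsum : ∑ i, c i • v i = x := by
    have := b.sum_repr' x
    simpa [hb, hcdef] using this
  have hysum : y = ∑ i, (((μ i:ℂ))⁻¹ * c i) • v i := by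
    rw [hy, ← hxsum, map_sum]
    refine Finset.sum_congr rfl fun i _ => ?_
    rw [map_smul, hinv i, smul_smul, mul_comm]
  -- coordinates
  have hreprv : ∀ j, b.repr (v j) = EuclideanSpace.single j (1:ℂ) := by
    intro j; rw [← hb]; exact b.repr_self j
  have hreprx : ∀ i, b.repr x i = c i := by
    intro i; rw [b.repr_apply_apply, hb]
  have hortho : ∀ i j, (inner ℂ (v i) (v j) : ℂ) = if i = j then 1 else 0 :=
    orthonormal_iff_ite.mp hv
  have hrepry : ∀ i, b.repr y i = ((μ i:ℂ))⁻¹ * c i := by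
    intro i
    rw [b.repr_apply_apply, hb, hysum, inner_sum]
    simp_rw [inner_smul_right]
    rw [Finset.sum_eq_single i]
    · rw [hortho i i]; simp
    · intro j _ hj; rw [hortho i j]; simp [Ne.symm hj]
    · simp
  have hvy : (inner ℂ (v 0) y : ℂ) = ((μ 0:ℂ))⁻¹ * c 0 := by
    rw [← hb, ← b.repr_apply_apply, hrepry]
  -- the two residuals
  set z := x - c 0 • v 0 with hz
  set w := y - (((μ 0:ℂ))⁻¹ * c 0) • v 0 with hw
  have hreprz : ∀ i, b.repr z i = if i = 0 then 0 else c i := by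
    intro i
    rw [hz, map_sub, map_smul, hreprv]
    by_cases h : i = 0 <;>
      simp [h, EuclideanSpace.single_apply, hreprx]
  have hreprw : ∀ i, b.repr w i = if i = 0 then 0 else ((μ i:ℂ))⁻¹ * c i := by
    intro i
    rw [hw, map_sub, map_smul, hreprv]
    by_cases h : i = 0 <;>
      simp [h, EuclideanSpace.single_apply, hrepry]
  have hμ1 : 0 < μ 1 := hμpos 1
  -- norm comparison
  have hnormw : ‖w‖ ≤ (μ 1)⁻¹ * ‖z‖ := by
    have hwnorm : ‖w‖ = ‖b.repr w‖ := (b.repr.norm_map w).symm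
    have hznorm : ‖z‖ = ‖b.repr z‖ := (b.repr.norm_map z).symm
    rw [hwnorm, hznorm, EuclideanSpace.norm_eq, EuclideanSpace.norm_eq]
    rw [← Real.sqrt_sq (le_of_lt (inv_pos.mpr hμ1)), ← Real.sqrt_mul (by positivity)]
    apply Real.sqrt_le_sqrt
    rw [Finset.mul_sum]
    apply Finset.sum_le_sum
    intro i _
    rw [hreprw, hreprz]
    by_cases h : i = 0
    · simp [h]
    · simp only [h, if_false]
      have h1i : μ 1 ≤ μ i := hμmono (by
        have : (0:Fin (n+2)) < i := by
          exact lt_of_le_of_ne (Fin.zero_le i) (Ne.symm h)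
        exact this)
      have hμi : 0 < μ i := hμpos i
      rw [norm_mul, mul_pow, norm_inv, Complex.norm_real,
        Real.norm_of_nonneg (hμpos i).le]
      have hle : (μ i)⁻¹ ≤ (μ 1)⁻¹ := by
        rw [inv_le_inv₀ hμi hμ1]; exact h1i
      gcongr
  -- norms of the leading coefficients
  have hnc0 : 0 < ‖c 0‖ := norm_pos_iff.mpr hx1
  have hvynorm : ‖(inner ℂ (v 0) y : ℂ)‖ = (μ 0)⁻¹ * ‖c 0‖ := by
    rw [hvy, norm_mul, norm_inv, Complex.norm_real,
      Real.norm_of_nonneg (hμpos 0).le]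
  have hμ0 : 0 < μ 0 := hμpos 0
  -- put it together
  have hzx : (inner ℂ (v 0) x : ℂ) = c 0 := rfl
  unfold tanAngle
  have hden : ‖((μ 0:ℂ))⁻¹ * c 0‖ = (μ 0)⁻¹ * ‖c 0‖ := by
    rw [norm_mul, norm_inv, Complex.norm_real, Real.norm_of_nonneg hμ0.le]
  rw [hvy, hzx, hden, ← hw, ← hz]
  calc ‖w‖ / ((μ 0)⁻¹ * ‖c 0‖)
      ≤ ((μ 1)⁻¹ * ‖z‖) / ((μ 0)⁻¹ * ‖c 0‖) := by gcongr
    _ = μ 0 / μ 1 * (‖z‖ / ‖c 0‖) := by field_simp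
end

section
/- Assume n ≥ 3 and λ₂ < λ₃. Let x⁰ = ξ₁v₁ + ξ₂v₂ + ⋯ + ξₙvₙ with ξ₂ ≠ 0, and for each integer j ≥ 0 set x^{(j)} = A^{−j}x⁰ and x̌^{(j)} = (x^{(j)} − v₁(v₁*x^{(j)}))/‖x^{(j)} − v₁(v₁*x^{(j)})‖₂ (which is well defined since ξ₂ ≠ 0). Then lim_{j→∞} λ₁‖A⁻¹x̌^{(j)}‖₂ = λ₁/λ₂; that is, the per-step convergence rate of inverse iteration tends to the asymptotic rate λ₁/λ₂. -/
open scoped ComplexOrder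

private lemma myToEuclideanLin_mul {m : ℕ} (M N : Matrix (Fin m) (Fin m) ℂ)
    (x : EuclideanSpace ℂ (Fin m)) :
    Matrix.toEuclideanLin (M * N) x = Matrix.toEuclideanLin M (Matrix.toEuclideanLin N x) := by
  simp [Matrix.toEuclideanLin_apply, Matrix.mulVec_mulVec]

private lemma myToEuclideanLin_one {m : ℕ} (x : EuclideanSpace ℂ (Fin m)) :
    Matrix.toEuclideanLin (1 : Matrix (Fin m) (Fin m) ℂ) x = x := by
  simp [Matrix.toEuclideanLin_apply]

private lemma myNorm_sum_orthonormal {m : ℕ} {v : Fin m → EuclideanSpace ℂ (Fin m)}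
    (hv : Orthonormal ℂ v) (l : Fin m → ℂ) :
    ‖∑ i, l i • v i‖ = Real.sqrt (∑ i, ‖l i‖ ^ 2) := by
  have h := hv.inner_sum l l Finset.univ
  have h3 : ‖∑ i, l i • v i‖ ^ 2 = ∑ i, ‖l i‖ ^ 2 := by
    rw [@norm_sq_eq_re_inner ℂ, h, map_sum]
    refine Finset.sum_congr rfl fun i _ => ?_
    simp [← Complex.normSq_eq_conj_mul_self, Complex.normSq_eq_norm_sq, sq]
  rw [← h3, Real.sqrt_sq (norm_nonneg _)]
/-- The per-step convergence rate of inverse iteration tends to the asymptotic rate `λ₁/λ₂`: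
if `λ₂ < λ₃` and `x⁰ = ∑ ξᵢ vᵢ` with `ξ₂ ≠ 0`, setting `x⁽ʲ⁾ = A⁻ʲ x⁰` and
`x̌⁽ʲ⁾ = (x⁽ʲ⁾ − v₁(v₁*x⁽ʲ⁾))/‖x⁽ʲ⁾ − v₁(v₁*x⁽ʲ⁾)‖`, one has
`lim_{j→∞} λ₁ ‖A⁻¹ x̌⁽ʲ⁾‖ = λ₁/λ₂`. -/
theorem inverse_iteration_rate_tendsto_asymptotic {n : ℕ}
    (A : Matrix (Fin (n + 3)) (Fin (n + 3)) ℂ) (hA : A.PosDef)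
    (μ : Fin (n + 3) → ℝ) (hμpos : ∀ i, 0 < μ i) (hμmono : Monotone μ)
    (hμ23 : μ 1 < μ 2)
    (v : Fin (n + 3) → EuclideanSpace ℂ (Fin (n + 3))) (hv : Orthonormal ℂ v)
    (hAv : ∀ i, Matrix.toEuclideanLin A (v i) = (μ i : ℂ) • v i)
    (ξ : Fin (n + 3) → ℂ) (hξ₂ : ξ 1 ≠ 0)
    (x₀ : EuclideanSpace ℂ (Fin (n + 3))) (hx₀ : x₀ = ∑ i, ξ i • v i)
    (xj w xc : ℕ → EuclideanSpace ℂ (Fin (n + 3)))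
    (hxj : ∀ j, xj j = Matrix.toEuclideanLin (A⁻¹ ^ j) x₀)
    (hw : ∀ j, w j = xj j - (inner ℂ (v 0) (xj j) : ℂ) • v 0)
    (hxc : ∀ j, xc j = (‖w j‖ : ℂ)⁻¹ • w j) :
    Filter.Tendsto (fun j : ℕ => μ 0 * ‖Matrix.toEuclideanLin A⁻¹ (xc j)‖)
      Filter.atTop (nhds (μ 0 / μ 1)) := by
  have hdet : IsUnit A.det := (Matrix.isUnit_iff_isUnit_det _).1 hA.isUnit
  have hAAinv : A * A⁻¹ = 1 := Matrix.mul_nonsing_inv A hdet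
  have hAinvA : A⁻¹ * A = 1 := Matrix.nonsing_inv_mul A hdet
  have hμne : ∀ i, (μ i : ℂ) ≠ 0 := fun i => Complex.ofReal_ne_zero.2 (hμpos i).ne'
  -- A⁻¹ acts on eigenvectors
  have hinj : Function.Injective (Matrix.toEuclideanLin A⁻¹) := by
    intro x y hxy
    have := congrArg (Matrix.toEuclideanLin A) hxy
    rwa [← myToEuclideanLin_mul, ← myToEuclideanLin_mul, hAAinv,
      myToEuclideanLin_one, myToEuclideanLin_one] at this
  have hinjA : Function.Injective (Matrix.toEuclideanLin A) := by
    intro x y hxy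
    have := congrArg (Matrix.toEuclideanLin A⁻¹) hxy
    rwa [← myToEuclideanLin_mul, ← myToEuclideanLin_mul, hAinvA,
      myToEuclideanLin_one, myToEuclideanLin_one] at this
  have hAinvv : ∀ i, Matrix.toEuclideanLin A⁻¹ (v i) = ((μ i : ℂ))⁻¹ • v i := by
    intro i
    apply hinjA
    rw [← myToEuclideanLin_mul, hAAinv, myToEuclideanLin_one, map_smul, hAv i, smul_smul,
      inv_mul_cancel₀ (hμne i), one_smul]
  have hpowv : ∀ (j : ℕ) (i), Matrix.toEuclideanLin (A⁻¹ ^ j) (v i)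
      = (((μ i : ℂ))⁻¹) ^ j • v i := by
    intro j
    induction j with
    | zero => intro i; simp [myToEuclideanLin_one]
    | succ j ih =>
      intro i
      rw [pow_succ, myToEuclideanLin_mul, hAinvv i, map_smul, ih i, smul_smul, pow_succ,
        mul_comm]
  -- coefficients
  set c : ℕ → Fin (n + 3) → ℂ := fun j i => if i = 0 then 0 else ((μ i : ℂ))⁻¹ ^ j * ξ i with hc
  have hxj' : ∀ j, xj j = ∑ i, (((μ i : ℂ))⁻¹ ^ j * ξ i) • v i := by
    intro j
    rw [hxj, hx₀, map_sum]
    refine Finset.sum_congr rfl fun i _ => ?_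
    rw [map_smul, hpowv j i, smul_smul, mul_comm]
  have hwj : ∀ j, w j = ∑ i, c j i • v i := by
    intro j
    rw [hw, hxj' j, hv.inner_right_fintype]
    rw [← Finset.sum_erase_add _ _ (Finset.mem_univ 0),
      ← Finset.sum_erase_add _ (fun i => c j i • v i) (Finset.mem_univ 0)]
    have : c j 0 = 0 := by simp [hc]
    rw [this, zero_smul, add_zero, add_sub_cancel_right]
    refine Finset.sum_congr rfl fun i hi => ?_
    rw [hc]
    simp only [if_neg (Finset.ne_of_mem_erase hi)]
  -- normalized tail sequence
  set G : ℕ → ℝ := fun j => ∑ i, (if i = 0 then 0 else ((μ 1 / μ i) ^ 2) ^ j * ‖ξ i‖ ^ 2)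
    with hG
  have hμ1 : (0:ℝ) < μ 1 := hμpos 1
  have key : ∀ j, ‖∑ i, c j i • v i‖ = (μ 1)⁻¹ ^ j * Real.sqrt (G j) := by
    intro j
    rw [myNorm_sum_orthonormal hv]
    have hsum : ∑ i, ‖c j i‖ ^ 2 = ((μ 1)⁻¹ ^ j) ^ 2 * G j := by
      rw [hG, Finset.mul_sum]
      refine Finset.sum_congr rfl fun i _ => ?_
      by_cases h : i = 0
      · simp [hc, h]
      · simp only [hc, if_neg h, norm_mul, norm_pow, norm_inv, mul_pow]
        have hni : ‖((μ i : ℝ) : ℂ)‖ = μ i := by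
          rw [Complex.norm_real]
          exact Real.norm_of_nonneg (hμpos i).le
        rw [hni]
        have h1 := (hμpos 1).ne'
        have h2 := (hμpos i).ne'
        field_simp
        ring_nf
        rw [mul_assoc _ (μ 1 ^ (j * 2)), ← mul_pow, mul_inv_cancel₀ h1, one_pow, mul_one]
    rw [hsum, Real.sqrt_mul (by positivity), Real.sqrt_sq (by positivity)]
  have hnormw : ∀ j, ‖w j‖ = (μ 1)⁻¹ ^ j * Real.sqrt (G j) := fun j => by
    rw [hwj j, key j]
  have hAinvw : ∀ j, Matrix.toEuclideanLin A⁻¹ (w j) = ∑ i, c (j + 1) i • v i := by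
    intro j
    rw [hwj j, map_sum]
    refine Finset.sum_congr rfl fun i _ => ?_
    rw [map_smul, hAinvv i, smul_smul]
    congr 1
    by_cases h : i = 0
    · simp [hc, h]
    · simp only [hc, if_neg h, pow_succ]
      ring
  have hnormAw : ∀ j, ‖Matrix.toEuclideanLin A⁻¹ (w j)‖
      = (μ 1)⁻¹ ^ (j + 1) * Real.sqrt (G (j + 1)) := fun j => by rw [hAinvw j, key (j + 1)]
  have h10 : (1 : Fin (n + 3)) ≠ 0 := by
    simp [Fin.ext_iff]
  have hξn : (0:ℝ) < ‖ξ 1‖ ^ 2 := pow_pos (norm_pos_iff.2 hξ₂) 2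
  have hGpos : ∀ j, 0 < G j := by
    intro j
    refine Finset.sum_pos' (fun i _ => ?_) ⟨1, Finset.mem_univ _, ?_⟩
    · by_cases h : i = 0
      · simp [h]
      · rw [if_neg h]
        positivity
    · rw [if_neg h10, div_self hμ1.ne']
      simpa using hξn
  have hkey : ∀ j, μ 0 * ‖Matrix.toEuclideanLin A⁻¹ (xc j)‖
      = (μ 0 / μ 1) * (Real.sqrt (G (j + 1)) / Real.sqrt (G j)) := by
    intro j
    rw [hxc j, map_smul, norm_smul, norm_inv, Complex.norm_real,
      norm_norm, hnormw j, hnormAw j]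
    have hs : (0:ℝ) < Real.sqrt (G j) := Real.sqrt_pos.2 (hGpos j)
    rw [pow_succ]
    field_simp
  simp only [hkey]
  have hL : Filter.Tendsto G Filter.atTop (nhds (‖ξ 1‖ ^ 2)) := by
    have hval : (‖ξ 1‖ ^ 2 : ℝ)
        = ∑ i, (if i = (1 : Fin (n + 3)) then ‖ξ 1‖ ^ 2 else 0) := by simp
    rw [hG, hval]
    apply tendsto_finset_sum
    intro i _
    by_cases h0 : i = 0
    · subst h0
      simp only [if_pos rfl, if_neg (Ne.symm h10)]
      exact tendsto_const_nhds
    by_cases h1 : i = 1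
    · subst h1
      simp only [if_neg h0, if_pos rfl, div_self hμ1.ne', one_pow, one_mul, if_pos rfl]
      exact tendsto_const_nhds
    · have h2i : μ 2 ≤ μ i := by
        apply hμmono
        rw [Fin.le_def]
        have e2 : ((2 : Fin (n + 3)) : ℕ) = 2 := rfl
        have e0 : ((0 : Fin (n + 3)) : ℕ) = 0 := rfl
        have e1 : ((1 : Fin (n + 3)) : ℕ) = 1 := rfl
        have hi0 : (i : ℕ) ≠ 0 := fun h => h0 (Fin.ext (by rw [h, e0]))
        have hi1 : (i : ℕ) ≠ 1 := fun h => h1 (Fin.ext (by rw [h, e1]))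
        omega
      have hr : μ 1 / μ i < 1 := by
        rw [div_lt_one (hμpos i)]
        exact lt_of_lt_of_le hμ23 h2i
      have hr0 : 0 ≤ μ 1 / μ i := le_of_lt (div_pos hμ1 (hμpos i))
      have hlt : (μ 1 / μ i) ^ 2 < 1 := by nlinarith
      have hle : 0 ≤ (μ 1 / μ i) ^ 2 := by positivity
      have := (tendsto_pow_atTop_nhds_zero_of_lt_one hle hlt).mul_const (‖ξ i‖ ^ 2)
      rw [zero_mul] at this
      simpa only [if_neg h0, if_neg h1] using this
  have hsq : Filter.Tendsto (fun j => Real.sqrt (G j)) Filter.atTop (nhds ‖ξ 1‖) := by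
    have := hL.sqrt
    rwa [Real.sqrt_sq (norm_nonneg _)] at this
  have hsq' : Filter.Tendsto (fun j => Real.sqrt (G (j + 1))) Filter.atTop (nhds ‖ξ 1‖) :=
    hsq.comp (Filter.tendsto_add_atTop_nat 1)
  have hrat := hsq'.div hsq (norm_ne_zero_iff.2 hξ₂)
  rw [div_self (norm_ne_zero_iff.2 hξ₂)] at hrat
  have := hrat.const_mul (μ 0 / μ 1)
  rwa [mul_one] at this
end

section
/- (Theorem 5.1, one-step convergence rate of subspace iteration.) With B, V, X and the block decomposition X_k, X_{l∖k}, X_l^⊥ as in the context (X*X = I_k and X_k nonsingular), one has ‖[Σ_{l∖k}X_{l∖k}; Σ_l^⊥X_l^⊥] X_k^{−1} Σ_k^{−1}‖₂ ≤ (σ_{l+1}/σ_k) · ‖[X_{l∖k}; X_l^⊥] X_k^{−1}‖₂ + ((σ_{k+1} − σ_{l+1})/σ_k) · ‖X_{l∖k} X_k^{−1}‖₂. Equivalently, since tan∠(V_k, X) = ‖[X_{l∖k}; X_l^⊥] X_k^{−1}‖₂ and tan∠(V_k, BX) = ‖[Σ_{l∖k}X_{l∖k}; Σ_l^⊥X_l^⊥]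 X_k^{−1}Σ_k^{−1}‖₂, the convergence rate satisfies tan∠(V_k, BX)/tan∠(V_k, X) ≤ σ_{l+1}/σ_k + ((σ_{k+1} − σ_{l+1})/σ_k) · ‖X_{l∖k}X_k^{−1}‖₂ / ‖[X_{l∖k}; X_l^⊥]X_k^{−1}‖₂. -/
open scoped Matrix Matrix.Norms.L2Operator

/-- Embedding of the middle block `{k+1, …, l}` (0-based: `k, …, l−1`) into `Fin n`. -/
def midEmb (k l n : ℕ) (h : l ≤ n) : Fin (l - k) → Fin n :=
  fun i => ⟨k + i.1, by have := i.2; omega⟩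

/-- Embedding of the tail block `{l+1, …, n}` (0-based: `l, …, n−1`) into `Fin n`. -/
def highEmb (l n : ℕ) : Fin (n - l) → Fin n :=
  fun i => ⟨l + i.1, by have := i.2; omega⟩

section Helpers

variable {m₁ m₂ m n p q : Type*} [Fintype m₁] [Fintype m₂] [Fintype m] [Fintype n]
  [Fintype p] [Fintype q] [DecidableEq n] [DecidableEq q]

lemma l2_opNorm_diagonal_le {ι : Type*} [Fintype ι] [DecidableEq ι]
    (d : ι → ℂ) {c : ℝ} (hc : 0 ≤ c) (h : ∀ i, ‖d i‖ ≤ c) :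
    ‖Matrix.diagonal d‖ ≤ c := by
  rw [Matrix.l2_opNorm_def]
  refine ContinuousLinearMap.opNorm_le_bound _ hc fun x => ?_
  show ‖(Matrix.toEuclideanLin (Matrix.diagonal d)) x‖ ≤ c * ‖x‖
  have hx : ∀ i, ‖((Matrix.toEuclideanLin (Matrix.diagonal d)) x) i‖ = ‖d i * x i‖ := by
    intro i
    rw [Matrix.toEuclideanLin_apply]
    simp [Matrix.mulVec_diagonal]
  have hsum : ∑ i, (c * ‖x i‖) ^ 2 = c ^ 2 * ∑ i, ‖x i‖ ^ 2 := by
    rw [Finset.mul_sum]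
    exact Finset.sum_congr rfl fun i _ => by ring
  calc ‖(Matrix.toEuclideanLin (Matrix.diagonal d)) x‖
      = Real.sqrt (∑ i, ‖d i * x i‖ ^ 2) := by
        rw [EuclideanSpace.norm_eq]
        exact congrArg Real.sqrt (Finset.sum_congr rfl fun i _ => by rw [hx i])
    _ ≤ Real.sqrt (∑ i, (c * ‖x i‖) ^ 2) := by
        apply Real.sqrt_le_sqrt
        apply Finset.sum_le_sum
        intro i _
        have : ‖d i * x i‖ ≤ c * ‖x i‖ := by
          rw [norm_mul]
          exact mul_le_mul_of_nonneg_right (h i) (norm_nonneg _)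
        exact pow_le_pow_left₀ (norm_nonneg _) this 2
    _ = c * ‖x‖ := by
        rw [hsum, Real.sqrt_mul (sq_nonneg c), Real.sqrt_sq hc, EuclideanSpace.norm_eq]

lemma l2_opNorm_fromRows_zero (P : Matrix m₁ n ℂ) :
    ‖Matrix.fromRows P (0 : Matrix m₂ n ℂ)‖ = ‖P‖ := by
  have h1 := Matrix.l2_opNorm_conjTranspose_mul_self (Matrix.fromRows P (0 : Matrix m₂ n ℂ))
  have h2 := Matrix.l2_opNorm_conjTranspose_mul_self P
  rw [Matrix.conjTranspose_fromRows_eq_fromCols_conjTranspose,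
    Matrix.fromCols_mul_fromRows] at h1
  simp only [Matrix.conjTranspose_zero, Matrix.mul_zero, add_zero] at h1
  nlinarith [norm_nonneg (Matrix.fromRows P (0 : Matrix m₂ n ℂ)), norm_nonneg P,
    h1.symm.trans h2]

lemma l2_quad_bound (A : Matrix m n ℂ) (B : Matrix n p ℂ) (C : Matrix p q ℂ)
    (D : Matrix q q ℂ) {a d : ℝ} (hA : ‖A‖ ≤ a) (hD : ‖D‖ ≤ d) :
    ‖A * (B * (C * D))‖ ≤ a * ‖B * C‖ * d := by
  have ha0 : (0:ℝ) ≤ a := le_trans (norm_nonneg _) hA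
  calc ‖A * (B * (C * D))‖ ≤ ‖A‖ * ‖B * (C * D)‖ := Matrix.l2_opNorm_mul _ _
    _ = ‖A‖ * ‖B * C * D‖ := by rw [← Matrix.mul_assoc]
    _ ≤ ‖A‖ * (‖B * C‖ * ‖D‖) :=
        mul_le_mul_of_nonneg_left (Matrix.l2_opNorm_mul _ _) (norm_nonneg _)
    _ ≤ a * (‖B * C‖ * d) := by
        apply mul_le_mul hA _ (by positivity) ha0
        exact mul_le_mul_of_nonneg_left hD (norm_nonneg _)
    _ = a * ‖B * C‖ * d := by ring

lemma div_step {x D N c r : ℝ} (h : x ≤ c * D + r * N) (hx : 0 ≤ x) (hc : 0 ≤ c) (hr : 0 ≤ r)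
    (hN : 0 ≤ N) (hD : 0 ≤ D) : x / D ≤ c + r * (N / D) := by
  rcases eq_or_lt_of_le hD with hD0 | hD0
  · rw [← hD0, div_zero, div_zero, mul_zero, add_zero]
    exact hc
  · rw [div_le_iff₀ hD0]
    have : (c + r * (N / D)) * D = c * D + r * N := by field_simp
    linarith

end Helpers

/-- Theorem 5.1: the one-step convergence rate of the subspace iteration.
`B = VΣV*` is Hermitian positive definite with eigenvalues `σ₁ ≥ ⋯ ≥ σₙ > 0`;
`X ∈ ℂ^{n×k}` has orthonormal columns, with blocks `X_k = V_k*X` (nonsingular),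
`X_{l∖k} = V_{l∖k}*X`, `X_l^⊥ = (V_l^⊥)*X`.  Then
`‖[Σ_{l∖k}X_{l∖k}; Σ_l^⊥X_l^⊥] X_k⁻¹ Σ_k⁻¹‖ ≤ (σ_{l+1}/σ_k)·‖[X_{l∖k}; X_l^⊥]X_k⁻¹‖
  + ((σ_{k+1} − σ_{l+1})/σ_k)·‖X_{l∖k}X_k⁻¹‖`, and consequently
`tan∠(V_k,BX)/tan∠(V_k,X) ≤ σ_{l+1}/σ_k
  + ((σ_{k+1} − σ_{l+1})/σ_k)·‖X_{l∖k}X_k⁻¹‖/‖[X_{l∖k}; X_l^⊥]X_k⁻¹‖`. -/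
theorem subspace_iteration_one_step_rate {n k l : ℕ}
    (hk : 0 < k) (hkl : k < l) (hln : l < n)
    (σ : Fin n → ℝ) (hσpos : ∀ i, 0 < σ i) (hσ : Antitone σ)
    (V B : Matrix (Fin n) (Fin n) ℂ) (hV : V ∈ Matrix.unitaryGroup (Fin n) ℂ)
    (hB : B = V * Matrix.diagonal (fun i => (σ i : ℂ)) * Vᴴ)
    (X : Matrix (Fin n) (Fin k) ℂ) (hX : Xᴴ * X = 1)
    (Xk : Matrix (Fin k) (Fin k) ℂ)
    (hXk : Xk = (V.submatrix id (Fin.castLE (show k ≤ n by omega)))ᴴ * X)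
    (hXkinv : IsUnit Xk.det)
    (Xlk : Matrix (Fin (l - k)) (Fin k) ℂ)
    (hXlk : Xlk = (V.submatrix id (midEmb k l n hln.le))ᴴ * X)
    (Xlp : Matrix (Fin (n - l)) (Fin k) ℂ)
    (hXlp : Xlp = (V.submatrix id (highEmb l n))ᴴ * X) :
    ‖Matrix.fromRows
        (Matrix.diagonal (fun i => (σ (midEmb k l n hln.le i) : ℂ)) * Xlk)
        (Matrix.diagonal (fun i => (σ (highEmb l n i) : ℂ)) * Xlp) *
        (Xk⁻¹ * (Matrix.diagonal (fun i : Fin k => (σ (Fin.castLE (show k ≤ n by omega) i) : ℂ)))⁻¹)‖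
      ≤ σ ⟨l, hln⟩ / σ ⟨k - 1, by omega⟩ * ‖Matrix.fromRows Xlk Xlp * Xk⁻¹‖
        + (σ ⟨k, by omega⟩ - σ ⟨l, hln⟩) / σ ⟨k - 1, by omega⟩ * ‖Xlk * Xk⁻¹‖
    ∧ ‖Matrix.fromRows
        (Matrix.diagonal (fun i => (σ (midEmb k l n hln.le i) : ℂ)) * Xlk)
        (Matrix.diagonal (fun i => (σ (highEmb l n i) : ℂ)) * Xlp) *
        (Xk⁻¹ * (Matrix.diagonal (fun i : Fin k => (σ (Fin.castLE (show k ≤ n by omega) i) : ℂ)))⁻¹)‖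
        / ‖Matrix.fromRows Xlk Xlp * Xk⁻¹‖
      ≤ σ ⟨l, hln⟩ / σ ⟨k - 1, by omega⟩
        + (σ ⟨k, by omega⟩ - σ ⟨l, hln⟩) / σ ⟨k - 1, by omega⟩
          * (‖Xlk * Xk⁻¹‖ / ‖Matrix.fromRows Xlk Xlp * Xk⁻¹‖) := by
  have ha0 : 0 < σ ⟨k - 1, by omega⟩ := hσpos _
  have hc0 : 0 < σ ⟨l, hln⟩ := hσpos _
  have hbc : σ ⟨l, hln⟩ ≤ σ ⟨k, by omega⟩ := hσ (by simp only [Fin.mk_le_mk]; omega)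
  -- diagonal inverse
  have hSinv : (Matrix.diagonal (fun i : Fin k =>
        (σ (Fin.castLE (show k ≤ n by omega) i) : ℂ)))⁻¹
      = Matrix.diagonal (fun i : Fin k =>
        ((σ (Fin.castLE (show k ≤ n by omega) i) : ℂ))⁻¹) := by
    apply Matrix.inv_eq_right_inv
    rw [Matrix.diagonal_mul_diagonal]
    rw [show (fun i : Fin k => (σ (Fin.castLE (show k ≤ n by omega) i) : ℂ) *
        ((σ (Fin.castLE (show k ≤ n by omega) i) : ℂ))⁻¹) = fun _ => (1 : ℂ) from
      funext fun i => mul_inv_cancel₀ (Complex.ofReal_ne_zero.mpr (hσpos _).ne')]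
    exact Matrix.diagonal_one
  have hSnorm : ‖(Matrix.diagonal (fun i : Fin k =>
        (σ (Fin.castLE (show k ≤ n by omega) i) : ℂ)))⁻¹‖ ≤ (σ ⟨k - 1, by omega⟩)⁻¹ := by
    rw [hSinv]
    apply l2_opNorm_diagonal_le _ (by positivity)
    intro i
    rw [← Complex.ofReal_inv, Complex.norm_real, Real.norm_eq_abs,
      abs_of_pos (inv_pos.mpr (hσpos _))]
    apply inv_anti₀ ha0
    apply hσ
    simp only [Fin.le_def, Fin.coe_castLE]
    omega
  have hmidnorm : ‖Matrix.diagonal (fun i => (σ (midEmb k l n hln.le i) : ℂ))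
        - Matrix.diagonal (fun _ : Fin (l - k) => (σ ⟨l, hln⟩ : ℂ))‖
      ≤ σ ⟨k, by omega⟩ - σ ⟨l, hln⟩ := by
    rw [Matrix.diagonal_sub]
    apply l2_opNorm_diagonal_le _ (sub_nonneg.mpr hbc)
    intro i
    have h1 : σ ⟨l, hln⟩ ≤ σ (midEmb k l n hln.le i) := by
      apply hσ; simp only [Fin.le_def, midEmb]; omega
    have h2 : σ (midEmb k l n hln.le i) ≤ σ ⟨k, by omega⟩ := by
      apply hσ; simp only [Fin.le_def, midEmb]; omega
    simp only [Pi.sub_apply, ← Complex.ofReal_sub, Complex.norm_real, Real.norm_eq_abs]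
    rw [abs_of_nonneg (by linarith)]
    linarith
  have hDsnorm : ‖Matrix.diagonal (Sum.elim (fun _ : Fin (l - k) => (σ ⟨l, hln⟩ : ℂ))
        (fun i => (σ (highEmb l n i) : ℂ)))‖ ≤ σ ⟨l, hln⟩ := by
    apply l2_opNorm_diagonal_le _ hc0.le
    rintro (i | i)
    · simp only [Sum.elim_inl, Complex.norm_real, Real.norm_eq_abs, abs_of_pos hc0, le_refl]
    · simp only [Sum.elim_inr, Complex.norm_real, Real.norm_eq_abs,
        abs_of_pos (hσpos _)]
      apply hσ; simp only [Fin.le_def, highEmb]; omega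
  -- the splitting identity
  have hsplit : Matrix.fromRows
        (Matrix.diagonal (fun i => (σ (midEmb k l n hln.le i) : ℂ)) * Xlk)
        (Matrix.diagonal (fun i => (σ (highEmb l n i) : ℂ)) * Xlp)
      = Matrix.fromRows ((Matrix.diagonal (fun i => (σ (midEmb k l n hln.le i) : ℂ))
            - Matrix.diagonal (fun _ : Fin (l - k) => (σ ⟨l, hln⟩ : ℂ))) * Xlk)
          (0 : Matrix (Fin (n - l)) (Fin k) ℂ)
        + Matrix.diagonal (Sum.elim (fun _ : Fin (l - k) => (σ ⟨l, hln⟩ : ℂ))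
            (fun i => (σ (highEmb l n i) : ℂ))) * Matrix.fromRows Xlk Xlp := by
    ext i j
    rcases i with i | i
    · simp only [Matrix.fromRows_apply_inl, Matrix.add_apply, Matrix.diagonal_mul,
        Matrix.sub_mul, Matrix.sub_apply, Sum.elim_inl]
      ring
    · simp only [Matrix.fromRows_apply_inr, Matrix.add_apply, Matrix.zero_apply,
        Matrix.diagonal_mul, Sum.elim_inr]
      ring
  have part1 : ‖Matrix.fromRows
        (Matrix.diagonal (fun i => (σ (midEmb k l n hln.le i) : ℂ)) * Xlk)
        (Matrix.diagonal (fun i => (σ (highEmb l n i) : ℂ)) * Xlp) *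
        (Xk⁻¹ * (Matrix.diagonal (fun i : Fin k => (σ (Fin.castLE (show k ≤ n by omega) i) : ℂ)))⁻¹)‖
      ≤ σ ⟨l, hln⟩ / σ ⟨k - 1, by omega⟩ * ‖Matrix.fromRows Xlk Xlp * Xk⁻¹‖
        + (σ ⟨k, by omega⟩ - σ ⟨l, hln⟩) / σ ⟨k - 1, by omega⟩ * ‖Xlk * Xk⁻¹‖ := by
    rw [hsplit, Matrix.add_mul]
    refine le_trans (norm_add_le _ _) ?_
    have hA : ‖Matrix.fromRows ((Matrix.diagonal (fun i => (σ (midEmb k l n hln.le i) : ℂ))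
            - Matrix.diagonal (fun _ : Fin (l - k) => (σ ⟨l, hln⟩ : ℂ))) * Xlk)
          (0 : Matrix (Fin (n - l)) (Fin k) ℂ) *
          (Xk⁻¹ * (Matrix.diagonal (fun i : Fin k =>
            (σ (Fin.castLE (show k ≤ n by omega) i) : ℂ)))⁻¹)‖
        ≤ (σ ⟨k, by omega⟩ - σ ⟨l, hln⟩) * ‖Xlk * Xk⁻¹‖ * (σ ⟨k - 1, by omega⟩)⁻¹ := by
      rw [Matrix.fromRows_mul, Matrix.zero_mul, l2_opNorm_fromRows_zero,
        Matrix.mul_assoc]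
      exact l2_quad_bound _ _ _ _ hmidnorm hSnorm
    have hB2 : ‖Matrix.diagonal (Sum.elim (fun _ : Fin (l - k) => (σ ⟨l, hln⟩ : ℂ))
            (fun i => (σ (highEmb l n i) : ℂ))) * Matrix.fromRows Xlk Xlp *
          (Xk⁻¹ * (Matrix.diagonal (fun i : Fin k =>
            (σ (Fin.castLE (show k ≤ n by omega) i) : ℂ)))⁻¹)‖
        ≤ σ ⟨l, hln⟩ * ‖Matrix.fromRows Xlk Xlp * Xk⁻¹‖ * (σ ⟨k - 1, by omega⟩)⁻¹ := by
      rw [Matrix.mul_assoc]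
      exact l2_quad_bound _ _ _ _ hDsnorm hSnorm
    have hfin : (σ ⟨k, by omega⟩ - σ ⟨l, hln⟩) * ‖Xlk * Xk⁻¹‖ * (σ ⟨k - 1, by omega⟩)⁻¹
          + σ ⟨l, hln⟩ * ‖Matrix.fromRows Xlk Xlp * Xk⁻¹‖ * (σ ⟨k - 1, by omega⟩)⁻¹
        = σ ⟨l, hln⟩ / σ ⟨k - 1, by omega⟩ * ‖Matrix.fromRows Xlk Xlp * Xk⁻¹‖
          + (σ ⟨k, by omega⟩ - σ ⟨l, hln⟩) / σ ⟨k - 1, by omega⟩ * ‖Xlk * Xk⁻¹‖ := by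
      rw [div_eq_mul_inv, div_eq_mul_inv]; ring
    linarith
  refine ⟨part1, ?_⟩
  have := div_step (D := ‖Matrix.fromRows Xlk Xlp * Xk⁻¹‖) (N := ‖Xlk * Xk⁻¹‖)
    part1 (norm_nonneg _) (div_nonneg hc0.le ha0.le)
    (div_nonneg (by linarith) ha0.le) (norm_nonneg _) (norm_nonneg _)
  linarith
end
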